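/- Let n ≥ 0, 0 ≤ p ≤ n, and let V = {q·2^p : 0 ≤ q < 2^{n−p}} ≤ ℤ_{2^n}, with c an element whose n-bit binary representation has zeros in the first n−p bits. Then applying the n-fold tensor product of Hadamard gates to the normalized coset state gives H^{⊗n}|c+V⟩ = (1/√{2^p}) Σ_{k∈{0,1}^p} (−1)^{k·c'} |0⟩^{⊗(n−p)}|k⟩, where c' denotes the last p bits of c. In particular, the squared amplitudes are independent of c: the probability of measuring a bitstring is 2^{−p} if its first n−p bits are all zero, and 0 otherwise. -/

import Mathlib

/-- The single-qubit Hadamard gate: `⟨a|H|b⟩`, so that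
`H|b⟩ = (1/√2)(|0⟩ + (−1)^b |1⟩)`. -/
noncomputable def Hgate (a b : Bool) : ℂ :=
  (Real.sqrt 2 : ℂ)⁻¹ * (if a && b then -1 else 1)

lemma ite_forall_eq_prod {n : ℕ} (P : Fin n → Prop) [DecidablePred P] (v : ℂ) :
    (if ∀ i, P i then v else 0) = v * ∏ i, (if P i then (1:ℂ) else 0) := by
  by_cases h : ∀ i, P i
  · simp [h]
  · push_neg at h
    obtain ⟨i, hi⟩ := h
    have h0 : (if P i then (1:ℂ) else 0) = 0 := if_neg hi
    rw [if_neg (fun hh => hi (hh i)),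
      Finset.prod_eq_zero (Finset.mem_univ i) h0, mul_zero]

lemma card_filter_val_lt (n m : ℕ) (h : m ≤ n) :
    (Finset.univ.filter fun i : Fin n => i.val < m).card = m := by
  rw [Finset.card_filter,
    Fin.sum_univ_eq_sum_range (fun j => if j < m then 1 else 0) n,
    ← Finset.card_filter]
  have : (Finset.range n).filter (fun j => j < m) = Finset.range m := by
    ext j
    simp only [Finset.mem_filter, Finset.mem_range]
    omega
  rw [this, Finset.card_range]

lemma sqrt_two_pow (q : ℕ) : Real.sqrt (2 ^ q) = (Real.sqrt 2) ^ q := by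
  have h : ((Real.sqrt 2) ^ q) ^ 2 = 2 ^ q := by
    rw [← pow_mul, mul_comm, pow_mul, Real.sq_sqrt (by norm_num)]
  rw [← h, Real.sqrt_sq (by positivity)]

theorem hp0_hadamard_on_coset_state (n p : ℕ) (hp : p ≤ n)
    (c : Fin n → Bool) (hc : ∀ i : Fin n, i.val < n - p → c i = false)
    (k : Fin n → Bool) :
    (∑ y : Fin n → Bool,
        (∏ i : Fin n, Hgate (k i) (y i)) *
          (if ∀ i : Fin n, n - p ≤ i.val → y i = c i
            then ((Real.sqrt (2 ^ (n - p)) : ℂ))⁻¹ else 0))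
      = (if ∀ i : Fin n, i.val < n - p → k i = false
          then (Real.sqrt (2 ^ p) : ℂ)⁻¹ *
            (-1 : ℂ) ^ (Finset.univ.filter fun i : Fin n => k i && c i).card
          else 0) ∧
    ‖(∑ y : Fin n → Bool,
        (∏ i : Fin n, Hgate (k i) (y i)) *
          (if ∀ i : Fin n, n - p ≤ i.val → y i = c i
            then ((Real.sqrt (2 ^ (n - p)) : ℂ))⁻¹ else 0))‖ ^ 2
      = (if ∀ i : Fin n, i.val < n - p → k i = false
          then ((2 : ℝ) ^ p)⁻¹ else 0) := by
  set m := n - p with hm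
  set v : ℂ := ((Real.sqrt (2 ^ m) : ℂ))⁻¹ with hv
  set a : ℂ := (Real.sqrt 2 : ℂ)⁻¹ with ha
  have hs2 : ((Real.sqrt 2 : ℝ) : ℂ) ^ 2 = 2 := by
    rw [← Complex.ofReal_pow, Real.sq_sqrt (by norm_num)]
    norm_num
  have ha2 : a * a = 2⁻¹ := by
    rw [ha, ← mul_inv, ← sq, hs2]
  have hsqrtpow : ∀ q : ℕ, ((Real.sqrt (2 ^ q) : ℝ) : ℂ)⁻¹ = a ^ q := by
    intro q
    rw [sqrt_two_pow, Complex.ofReal_pow, ha, inv_pow]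
  have key : (∑ y : Fin n → Bool,
        (∏ i : Fin n, Hgate (k i) (y i)) *
          (if ∀ i : Fin n, m ≤ i.val → y i = c i then v else 0))
      = (if ∀ i : Fin n, i.val < m → k i = false
          then (Real.sqrt (2 ^ p) : ℂ)⁻¹ *
            (-1 : ℂ) ^ (Finset.univ.filter fun i : Fin n => k i && c i).card
          else 0) := by
    have step1 : ∀ y : Fin n → Bool,
        (∏ i : Fin n, Hgate (k i) (y i)) *
          (if ∀ i : Fin n, m ≤ i.val → y i = c i then v else 0)
        = v * ∏ i : Fin n, (Hgate (k i) (y i) *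
            (if m ≤ i.val → y i = c i then (1:ℂ) else 0)) := by
      intro y
      rw [ite_forall_eq_prod, Finset.prod_mul_distrib]
      ring
    rw [Finset.sum_congr rfl (fun y _ => step1 y), ← Finset.mul_sum,
      ← Fintype.prod_sum (fun i b => Hgate (k i) b * (if m ≤ i.val → b = c i then (1:ℂ) else 0))]
    have geval : ∀ i : Fin n,
        (∑ b : Bool, Hgate (k i) b * (if m ≤ i.val → b = c i then (1:ℂ) else 0))
        = if i.val < m then a * (if k i then 0 else 2)
          else a * (if k i && c i then -1 else 1) := by
      intro i
      by_cases hi : i.val < m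
      · have hnle : ¬ m ≤ i.val := not_le.mpr hi
        rw [if_pos hi]
        simp only [Fintype.sum_bool, hnle, false_implies, if_true, mul_one]
        cases hk : k i <;> simp [Hgate] <;> ring
      · rw [if_neg hi]
        have hle : m ≤ i.val := not_lt.mp hi
        simp only [Fintype.sum_bool, hle, true_implies]
        cases hci : c i <;> simp [Hgate] <;> rfl
    rw [Finset.prod_congr rfl (fun i _ => geval i)]
    by_cases hk : ∀ i : Fin n, i.val < m → k i = false
    · rw [if_pos hk]
      have hsplit : ∀ i : Fin n,
          (if i.val < m then a * (if k i then 0 else 2)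
            else a * (if k i && c i then -1 else 1))
          = a * (if i.val < m then 2 else (if k i && c i then (-1:ℂ) else 1)) := by
        intro i
        by_cases hi : i.val < m
        · simp [hi, hk i hi]
        · simp [hi]
      rw [Finset.prod_congr rfl (fun i _ => hsplit i), Finset.prod_mul_distrib,
        Finset.prod_const, Finset.prod_ite, Finset.prod_const]
      rw [card_filter_val_lt n m (by omega)]
      have hprodtail : (∏ i ∈ Finset.univ.filter (fun i : Fin n => ¬ i.val < m),
          (if k i && c i then (-1:ℂ) else 1))
          = (-1 : ℂ) ^ (Finset.univ.filter fun i : Fin n => k i && c i).card := by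
        rw [Finset.prod_ite, Finset.prod_const, Finset.prod_const, one_pow, mul_one,
          Finset.filter_filter]
        congr 2
        apply Finset.filter_congr
        intro i _
        constructor
        · rintro ⟨_, h⟩; exact h
        · intro h
          refine ⟨fun hlt => ?_, h⟩
          rw [hk i hlt] at h
          simp at h
      rw [hprodtail, Finset.card_univ, Fintype.card_fin]
      -- arithmetic: v * (a^n * (2^m * (-1)^card)) = (√(2^p))⁻¹ * (-1)^card
      rw [hv, hsqrtpow m, hsqrtpow p]
      have han : a ^ n = a ^ m * a ^ p := by
        rw [← pow_add]; congr 1; omega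
      have hone : a ^ m * a ^ m * (2:ℂ) ^ m = 1 := by
        rw [← mul_pow, ← mul_pow, ha2]; norm_num
      set t : ℂ := (-1 : ℂ) ^ (Finset.univ.filter fun i : Fin n => k i && c i).card
      calc a ^ m * (a ^ n * ((2:ℂ) ^ m * t))
          = (a ^ m * a ^ m * (2:ℂ) ^ m) * (a ^ p * t) := by rw [han]; ring
        _ = a ^ p * t := by rw [hone, one_mul]
    · rw [if_neg hk]
      push_neg at hk
      obtain ⟨i, hi, hki⟩ := hk
      have hki' : k i = true := by simpa using hki
      rw [Finset.prod_eq_zero (Finset.mem_univ i), mul_zero]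
      rw [if_pos hi, hki', if_pos rfl, mul_zero]
  refine ⟨key, ?_⟩
  rw [key]
  by_cases hk : ∀ i : Fin n, i.val < m → k i = false
  · rw [if_pos hk, if_pos hk]
    rw [norm_mul, norm_pow, norm_inv, norm_neg, norm_one, one_pow, mul_one,
      Complex.norm_real, Real.norm_eq_abs, abs_of_nonneg (Real.sqrt_nonneg _), ← Real.sqrt_inv,
      Real.sq_sqrt (by positivity)]
  · rw [if_neg hk, if_neg hk]
    simp
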